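/- Let d > 0, let x₀ ∈ ℝ² with ‖x₀‖ ≤ d, let 0 < R < 2d − ‖x₀‖, and let C₀ ∈ ℝ. If z : B_R(x₀) → ℝ is a measurable function satisfying z(x) ≥ 2 log(1/‖x − x₀‖) − C₀ for almost every x ∈ B_R(x₀), then ∫_{B_R(x₀)} e^{z(x)} / log(2d/‖x‖) dx = +∞. In particular there is no finite constant C with ∫_{B_R(x₀)} e^{z(x)}/log(2d/‖x‖) dx ≤ C. -/

import Mathlib

open MeasureTheory Metric Set Real

noncomputable abbrev E2 : Type := EuclideanSpace ℝ (Fin 2)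

open Filter Topology
open scoped ENNReal NNReal

example : Module.finrank ℝ E2 = 2 := by simp [finrank_euclideanSpace_fin]

lemma aux_lintegral_norm (f : ℝ → ℝ≥0∞) (hf : Measurable f) :
    ∫⁻ x : E2, f (‖x‖) = (volume : Measure E2).toSphere univ *
      ∫⁻ r in Ioi (0:ℝ), ENNReal.ofReal r * f r := by
  have hdim : Module.finrank ℝ E2 = 2 := by simp [finrank_euclideanSpace_fin]
  have h0 : ∫⁻ x : E2, f (‖x‖) = ∫⁻ x : ({0}ᶜ : Set E2), f (‖x.1‖) ∂(volume.comap Subtype.val) := by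
    rw [lintegral_subtype_comap (measurableSet_singleton (0:E2)).compl (fun a => f ‖a‖),
      restrict_compl_singleton]
  rw [h0]
  have hmp := (volume : Measure E2).measurePreserving_homeomorphUnitSphereProd
  have hg : Measurable fun p : sphere (0:E2) 1 × Ioi (0:ℝ) => f p.2.1 :=
    hf.comp (measurable_subtype_coe.comp measurable_snd)
  have h1 : ∫⁻ x : ({0}ᶜ : Set E2), f (‖x.1‖) ∂(volume.comap Subtype.val) =
      ∫⁻ p : sphere (0:E2) 1 × Ioi (0:ℝ), f p.2.1
        ∂((volume : Measure E2).toSphere.prod (.volumeIoiPow (Module.finrank ℝ E2 - 1))) := by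
    rw [← hmp.lintegral_comp hg]
    simp [homeomorphUnitSphereProd_apply_snd_coe]
  rw [h1, hdim]
  have h2 : ∫⁻ p : sphere (0:E2) 1 × Ioi (0:ℝ), f p.2.1
        ∂((volume : Measure E2).toSphere.prod (.volumeIoiPow (2 - 1))) =
      ∫⁻ y : Ioi (0:ℝ), f y.1
        ∂(((volume : Measure E2).toSphere.prod (.volumeIoiPow (2 - 1))).map Prod.snd) :=
    (lintegral_map (hf.comp measurable_subtype_coe) measurable_snd).symm
  rw [h2, Measure.map_snd_prod, lintegral_smul_measure]
  congr 1
  show ∫⁻ y : Ioi (0:ℝ), f y.1 ∂(Measure.volumeIoiPow 1) = _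
  rw [Measure.volumeIoiPow,
    lintegral_withDensity_eq_lintegral_mul _ (by fun_prop)
      (show Measurable fun y : Ioi (0:ℝ) => f y.1 from hf.comp measurable_subtype_coe)]
  have h3 := lintegral_subtype_comap (μ := (volume : Measure ℝ))
    (measurableSet_Ioi (a := (0:ℝ))) (fun a : ℝ => ENNReal.ofReal (a ^ 1) * f a)
  simp only [pow_one] at h3 ⊢
  exact h3

lemma aux_lintegral_ball (x₀ : E2) (ρ : ℝ) (f : ℝ → ℝ≥0∞) (hf : Measurable f) :
    ∫⁻ x in ball x₀ ρ, f (‖x - x₀‖) = (volume : Measure E2).toSphere univ *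
      ∫⁻ r in Ioo (0:ℝ) ρ, ENNReal.ofReal r * f r := by
  have hmp : MeasurePreserving (· + x₀) (volume : Measure E2) volume :=
    measurePreserving_add_right volume x₀
  have himg : (· + x₀) '' ball (0:E2) ρ = ball x₀ ρ := by
    ext y
    constructor
    · rintro ⟨x, hx, rfl⟩; simpa [mem_ball, dist_eq_norm] using hx
    · intro hy
      exact ⟨y - x₀, by simpa [mem_ball, dist_eq_norm] using hy, by module⟩
  have h1 : ∫⁻ x in ball x₀ ρ, f (‖x - x₀‖) = ∫⁻ x in ball (0:E2) ρ, f (‖x‖) := by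
    rw [← himg, ← hmp.setLIntegral_comp_emb
      (MeasurableEquiv.addRight x₀).measurableEmbedding (fun y => f (‖y - x₀‖))]
    simp
  rw [h1]
  have h2 : ∀ x : E2, (ball (0:E2) ρ).indicator (fun x => f ‖x‖) x
      = (Iio ρ).indicator f ‖x‖ := by
    intro x
    by_cases hx : x ∈ ball (0:E2) ρ
    · rw [indicator_of_mem hx, indicator_of_mem (by simpa [mem_ball_zero_iff] using hx)]
    · rw [indicator_of_notMem hx, indicator_of_notMem (by simpa [mem_ball_zero_iff] using hx)]
  rw [← lintegral_indicator measurableSet_ball]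
  calc ∫⁻ x, (ball (0:E2) ρ).indicator (fun x => f ‖x‖) x
      = ∫⁻ x : E2, (Iio ρ).indicator f ‖x‖ := lintegral_congr h2
    _ = (volume : Measure E2).toSphere univ *
        ∫⁻ r in Ioi (0:ℝ), ENNReal.ofReal r * (Iio ρ).indicator f r :=
        aux_lintegral_norm _ (hf.indicator measurableSet_Iio)
    _ = (volume : Measure E2).toSphere univ * ∫⁻ r in Ioo (0:ℝ) ρ, ENNReal.ofReal r * f r := by
        congr 1
        rw [← lintegral_indicator measurableSet_Ioi, ← lintegral_indicator measurableSet_Ioo]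
        refine lintegral_congr fun r => ?_
        by_cases hr1 : r ∈ Ioi (0:ℝ)
        · by_cases hr2 : r ∈ Iio ρ
          · rw [indicator_of_mem hr1, indicator_of_mem hr2,
              indicator_of_mem (show r ∈ Ioo 0 ρ from ⟨hr1, hr2⟩)]
          · rw [indicator_of_mem hr1, indicator_of_notMem hr2,
              indicator_of_notMem (show r ∉ Ioo 0 ρ from fun h => hr2 h.2), mul_zero]
        · rw [indicator_of_notMem hr1,
            indicator_of_notMem (show r ∉ Ioo 0 ρ from fun h => hr1 h.1)]

lemma lint_top_of_not_integrableOn {g : ℝ → ℝ} (hg : Measurable g) {s : Set ℝ}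
    (hs : MeasurableSet s) (h0 : ∀ x ∈ s, 0 ≤ g x) (h : ¬ IntegrableOn g s) :
    ∫⁻ x in s, ENNReal.ofReal (g x) = ⊤ := by
  by_contra hne
  exact h ((lintegral_ofReal_ne_top_iff_integrable hg.aestronglyMeasurable
    ((ae_restrict_iff' hs).2 (ae_of_all _ h0))).1 hne)

lemma not_integrableOn_loglog (d : ℝ) (hd : 0 < d) (σ : ℝ) (hσ : 0 < σ) :
    ¬ IntegrableOn (fun r : ℝ => 1 / (r * Real.log (2 * d / r))) (Ioc 0 σ) := by
  have hl : Ioc (0:ℝ) σ ∈ 𝓝[>] (0:ℝ) := Ioc_mem_nhdsGT hσ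
  have hev : Ioo (0:ℝ) d ∈ 𝓝[>] (0:ℝ) := Ioo_mem_nhdsGT hd
  have hder : ∀ r ∈ Ioo (0:ℝ) d,
      HasDerivAt (fun r => Real.log (Real.log (2 * d / r)))
        (-(1 / (r * Real.log (2 * d / r)))) r := by
    intro r hr
    obtain ⟨hr0, hrd⟩ := hr
    have hpos : 1 < 2 * d / r := by
      rw [lt_div_iff₀ hr0]; linarith
    have h1 : HasDerivAt (fun r : ℝ => 2 * d / r) ((0 * r - 2 * d * 1) / r ^ 2) r :=
      (hasDerivAt_const r (2 * d)).div (hasDerivAt_id r) hr0.ne'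
    have h2 := h1.log (by positivity)
    have h3 := h2.log (ne_of_gt (Real.log_pos hpos))
    convert h3 using 1
    have hL : Real.log (2 * d / r) ≠ 0 := ne_of_gt (Real.log_pos hpos)
    field_simp
    ring
  refine not_integrableOn_of_tendsto_norm_atTop_of_deriv_isBigO_filter
    (f := fun r => Real.log (Real.log (2 * d / r))) (𝓝[>] (0:ℝ)) hl ?_ ?_ ?_
  · filter_upwards [hev] with r hr using (hder r hr).differentiableAt
  · have h1 : Tendsto (fun r : ℝ => 2 * d / r) (𝓝[>] (0:ℝ)) atTop := by
      have := tendsto_inv_nhdsGT_zero (𝕜 := ℝ)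
      have h2 := Tendsto.const_mul_atTop (by linarith : (0:ℝ) < 2 * d) this
      refine h2.congr fun r => ?_
      rw [div_eq_mul_inv]
    exact tendsto_norm_atTop_atTop.comp
      (Real.tendsto_log_atTop.comp (Real.tendsto_log_atTop.comp h1))
  · have heq : deriv (fun r => Real.log (Real.log (2 * d / r)))
        =ᶠ[𝓝[>] (0:ℝ)] fun r => -(1 / (r * Real.log (2 * d / r))) := by
      filter_upwards [hev] with r hr using (hder r hr).deriv
    exact heq.trans_isBigO (Asymptotics.isBigO_refl _ _).neg_left

lemma caseA_top (c ρ : ℝ) (hc : 0 < c) (hρ : 0 < ρ) :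
    ∫⁻ r in Ioo (0:ℝ) ρ, ENNReal.ofReal r * ENNReal.ofReal (c / r ^ 2) = ⊤ := by
  have hcong : ∀ r ∈ Ioo (0:ℝ) ρ, ENNReal.ofReal r * ENNReal.ofReal (c / r ^ 2)
      = ENNReal.ofReal (c / r) := by
    intro r hr
    rw [← ENNReal.ofReal_mul hr.1.le]
    congr 1
    have hr0 : r ≠ 0 := hr.1.ne'
    field_simp
  rw [setLIntegral_congr_fun measurableSet_Ioo hcong]
  refine lint_top_of_not_integrableOn (by fun_prop) measurableSet_Ioo
    (fun r hr => div_nonneg hc.le hr.1.le) ?_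
  intro hint
  have h2 : IntegrableOn (fun r : ℝ => c / r) (Ioc 0 (ρ/2)) :=
    hint.mono_set (fun r hr => ⟨hr.1, lt_of_le_of_lt hr.2 (by linarith)⟩)
  have h3 : IntegrableOn (fun r : ℝ => r⁻¹) (Ioc 0 (ρ/2)) := by
    have h4 := h2.const_mul c⁻¹
    refine IntegrableOn.congr_fun h4 (fun r _ => ?_) measurableSet_Ioc
    rw [div_eq_mul_inv, ← mul_assoc, inv_mul_cancel₀ hc.ne', one_mul]
  have h5 : IntervalIntegrable (fun r : ℝ => r⁻¹) volume 0 (ρ/2) := by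
    rw [intervalIntegrable_iff, uIoc_of_le (by linarith)]
    exact h3
  rw [intervalIntegrable_inv_iff] at h5
  rcases h5 with h | h
  · linarith
  · exact h (by rw [Set.mem_uIcc]; left; exact ⟨le_refl _, by linarith⟩)

lemma caseB_top (c d ρ : ℝ) (hc : 0 < c) (hd : 0 < d) (hρ : 0 < ρ) (hρd : ρ ≤ d) :
    ∫⁻ r in Ioo (0:ℝ) ρ,
      ENNReal.ofReal r * ENNReal.ofReal (c / (r ^ 2 * Real.log (2 * d / r))) = ⊤ := by
  have hLpos : ∀ r ∈ Ioo (0:ℝ) ρ, 0 < Real.log (2 * d / r) := by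
    intro r hr
    refine Real.log_pos ?_
    rw [lt_div_iff₀ hr.1]
    have := hr.2
    nlinarith
  have hcong : ∀ r ∈ Ioo (0:ℝ) ρ,
      ENNReal.ofReal r * ENNReal.ofReal (c / (r ^ 2 * Real.log (2 * d / r)))
      = ENNReal.ofReal (c / (r * Real.log (2 * d / r))) := by
    intro r hr
    rw [← ENNReal.ofReal_mul hr.1.le]
    congr 1
    have hL := (hLpos r hr).ne'
    have hr0 : r ≠ 0 := hr.1.ne'
    field_simp
  rw [setLIntegral_congr_fun measurableSet_Ioo hcong]
  refine lint_top_of_not_integrableOn (measurable_const.div (measurable_id.mul (Real.measurable_log.comp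
      (measurable_const.div measurable_id)))) measurableSet_Ioo
    (fun r hr => div_nonneg hc.le (mul_nonneg hr.1.le (hLpos r hr).le)) ?_
  intro hint
  have h2 : IntegrableOn (fun r : ℝ => c / (r * Real.log (2 * d / r))) (Ioc 0 (ρ/2)) :=
    hint.mono_set (fun r hr => ⟨hr.1, lt_of_le_of_lt hr.2 (by linarith)⟩)
  have h3 : IntegrableOn (fun r : ℝ => 1 / (r * Real.log (2 * d / r))) (Ioc 0 (ρ/2)) := by
    have h4 := h2.const_mul c⁻¹
    refine IntegrableOn.congr_fun h4 (fun r _ => ?_) measurableSet_Ioc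
    rw [div_eq_mul_inv, ← mul_assoc, inv_mul_cancel₀ hc.ne', one_mul, one_div]
  exact not_integrableOn_loglog d hd (ρ/2) (by linarith) h3

lemma ae_ne_restrict (s : Set E2) (a : E2) : ∀ᵐ x ∂(volume.restrict s), x ≠ a := by
  refine ae_restrict_of_ae ?_
  have h : {x : E2 | ¬ x ≠ a} = {a} := by ext y; simp
  rw [ae_iff, h]
  exact measure_singleton a

lemma exp_low_bound {r C₀ zv : ℝ} (hr : 0 < r) (hzx : 2 * Real.log (1 / r) - C₀ ≤ zv) :
    Real.exp (-C₀) / r ^ 2 ≤ Real.exp zv := by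
  have h1 : Real.exp (2 * Real.log (1 / r) - C₀) ≤ Real.exp zv := Real.exp_le_exp.2 hzx
  have e1 : Real.exp (2 * Real.log (1 / r)) = 1 / r ^ 2 := by
    rw [two_mul, Real.exp_add, Real.exp_log (by positivity)]
    ring
  have h2 : Real.exp (2 * Real.log (1 / r) - C₀) = Real.exp (-C₀) / r ^ 2 := by
    rw [Real.exp_sub, e1, Real.exp_neg]
    ring
  rwa [h2] at h1

lemma hsph_ne_zero : (volume : Measure E2).toSphere univ ≠ 0 := by
  rw [Measure.toSphere_apply_univ]
  refine mul_ne_zero ?_ (measure_ball_pos volume 0 one_pos).ne'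
  have hdim : Module.finrank ℝ E2 = 2 := by simp [finrank_euclideanSpace_fin]
  rw [hdim]
  norm_num

theorem exp_of_log_singularity_not_integrable
    (d : ℝ) (hd : 0 < d) (x₀ : E2) (hx₀d : ‖x₀‖ ≤ d)
    (R : ℝ) (hR : 0 < R) (hRlt : R < 2 * d - ‖x₀‖) (C₀ : ℝ)
    (z : E2 → ℝ) (hz : Measurable z)
    (hlow : ∀ᵐ x ∂(volume.restrict (ball x₀ R)),
      2 * Real.log (1 / ‖x - x₀‖) - C₀ ≤ z x) :
    (∫⁻ x in ball x₀ R,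
        ENNReal.ofReal (Real.exp (z x) / Real.log (2 * d / ‖x‖)) = ⊤) ∧
    ∀ C : ℝ, ¬ ((∫ x in ball x₀ R, Real.exp (z x) / Real.log (2 * d / ‖x‖)) ≤ C ∧
      IntegrableOn (fun x : E2 => Real.exp (z x) / Real.log (2 * d / ‖x‖)) (ball x₀ R)) := by

  have h2dR : ‖x₀‖ + R < 2 * d := by linarith
  have hφnonneg : ∀ x ∈ ball x₀ R, 0 ≤ Real.exp (z x) / Real.log (2 * d / ‖x‖) := by
    intro x hx
    rcases eq_or_lt_of_le (norm_nonneg x) with h0 | h0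
    · rw [← h0]
      simp
    · have hxlt : ‖x‖ < 2 * d := by
        have h1 : ‖x‖ - ‖x₀‖ ≤ ‖x - x₀‖ := norm_sub_norm_le x x₀
        have h2 : ‖x - x₀‖ < R := by rwa [mem_ball, dist_eq_norm] at hx
        linarith
      have hone : (1:ℝ) ≤ 2 * d / ‖x‖ := by
        rw [le_div_iff₀ h0]; linarith
      exact div_nonneg (Real.exp_pos _).le (Real.log_nonneg hone)
  have key : ∫⁻ x in ball x₀ R,
      ENNReal.ofReal (Real.exp (z x) / Real.log (2 * d / ‖x‖)) = ⊤ := by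
    rw [← top_le_iff]
    by_cases hx₀ : x₀ = 0
    · -- center at the origin
      subst hx₀
      set ρ := min R d with hρdef
      have hρpos : 0 < ρ := lt_min hR hd
      have hρR : ρ ≤ R := min_le_left _ _
      have hρd : ρ ≤ d := min_le_right _ _
      set f : ℝ → ℝ≥0∞ :=
        fun r => ENNReal.ofReal (Real.exp (-C₀) / (r ^ 2 * Real.log (2 * d / r))) with hfdef
      have hf : Measurable f := by
        refine Measurable.ennreal_ofReal ?_
        exact measurable_const.div ((measurable_id.pow_const 2).mul
          (Real.measurable_log.comp (measurable_const.div measurable_id)))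
      have hradial : ∫⁻ x in ball (0:E2) ρ, f (‖x - 0‖) = ⊤ := by
        rw [aux_lintegral_ball 0 ρ f hf,
          caseB_top _ d ρ (by positivity) hd hρpos hρd]
        exact ENNReal.mul_top hsph_ne_zero
      have hae : ∀ᵐ x ∂(volume.restrict (ball (0:E2) ρ)),
          f (‖x - 0‖) ≤ ENNReal.ofReal (Real.exp (z x) / Real.log (2 * d / ‖x‖)) := by
        have hlow' : ∀ᵐ x ∂(volume.restrict (ball (0:E2) ρ)),
            2 * Real.log (1 / ‖x - 0‖) - C₀ ≤ z x :=
          ae_restrict_of_ae_restrict_of_subset (ball_subset_ball hρR) hlow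
        filter_upwards [ae_restrict_mem measurableSet_ball, hlow',
          ae_ne_restrict (ball (0:E2) ρ) 0] with x hx hzx hx0
        rw [sub_zero] at hzx ⊢
        have hr0 : 0 < ‖x‖ := norm_pos_iff.2 hx0
        have hrρ : ‖x‖ < ρ := mem_ball_zero_iff.1 hx
        have hL : 0 < Real.log (2 * d / ‖x‖) := by
          refine Real.log_pos ?_
          rw [lt_div_iff₀ hr0]
          have : ρ ≤ 2 * d := by linarith
          nlinarith
        refine ENNReal.ofReal_le_ofReal ?_
        have hexp := exp_low_bound hr0 hzx
        calc Real.exp (-C₀) / (‖x‖ ^ 2 * Real.log (2 * d / ‖x‖))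
            = (Real.exp (-C₀) / ‖x‖ ^ 2) / Real.log (2 * d / ‖x‖) := by
              rw [div_div]
          _ ≤ Real.exp (z x) / Real.log (2 * d / ‖x‖) := by gcongr
      calc (⊤ : ℝ≥0∞) = ∫⁻ x in ball (0:E2) ρ, f (‖x - 0‖) := hradial.symm
        _ ≤ ∫⁻ x in ball (0:E2) ρ,
            ENNReal.ofReal (Real.exp (z x) / Real.log (2 * d / ‖x‖)) :=
          lintegral_mono_ae hae
        _ ≤ ∫⁻ x in ball (0:E2) R,
            ENNReal.ofReal (Real.exp (z x) / Real.log (2 * d / ‖x‖)) :=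
          lintegral_mono_set (ball_subset_ball hρR)
    · -- center away from the origin
      have hnx0 : 0 < ‖x₀‖ := norm_pos_iff.2 hx₀
      set ρ := min R (‖x₀‖ / 2) with hρdef
      have hρpos : 0 < ρ := lt_min hR (by positivity)
      have hρR : ρ ≤ R := min_le_left _ _
      have hρx : ρ ≤ ‖x₀‖ / 2 := min_le_right _ _
      set M := Real.log (4 * d / ‖x₀‖) with hMdef
      have hMpos : 0 < M := by
        refine Real.log_pos ?_
        rw [lt_div_iff₀ hnx0]
        linarith
      set c := Real.exp (-C₀) / M with hcdef
      have hc : 0 < c := by positivity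
      set f : ℝ → ℝ≥0∞ := fun r => ENNReal.ofReal (c / r ^ 2) with hfdef
      have hf : Measurable f := by
        refine Measurable.ennreal_ofReal ?_
        exact measurable_const.div (measurable_id.pow_const 2)
      have hradial : ∫⁻ x in ball x₀ ρ, f (‖x - x₀‖) = ⊤ := by
        rw [aux_lintegral_ball x₀ ρ f hf, caseA_top c ρ hc hρpos]
        exact ENNReal.mul_top hsph_ne_zero
      have hae : ∀ᵐ x ∂(volume.restrict (ball x₀ ρ)),
          f (‖x - x₀‖) ≤ ENNReal.ofReal (Real.exp (z x) / Real.log (2 * d / ‖x‖)) := by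
        have hlow' : ∀ᵐ x ∂(volume.restrict (ball x₀ ρ)),
            2 * Real.log (1 / ‖x - x₀‖) - C₀ ≤ z x :=
          ae_restrict_of_ae_restrict_of_subset (ball_subset_ball hρR) hlow
        filter_upwards [ae_restrict_mem measurableSet_ball, hlow',
          ae_ne_restrict (ball x₀ ρ) x₀] with x hx hzx hx0
        have hr0 : 0 < ‖x - x₀‖ := by
          rw [norm_pos_iff, sub_ne_zero]; exact hx0
        have hrρ : ‖x - x₀‖ < ρ := by rwa [mem_ball, dist_eq_norm] at hx
        have hxlow : ‖x₀‖ / 2 ≤ ‖x‖ := by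
          have h1 : ‖x₀‖ - ‖x‖ ≤ ‖x₀ - x‖ := norm_sub_norm_le x₀ x
          rw [norm_sub_rev] at h1
          linarith
        have hxpos : 0 < ‖x‖ := lt_of_lt_of_le (by positivity) hxlow
        have hxlt : ‖x‖ < 2 * d := by
          have h1 : ‖x‖ - ‖x₀‖ ≤ ‖x - x₀‖ := norm_sub_norm_le x x₀
          linarith
        have hL : 0 < Real.log (2 * d / ‖x‖) :=
          Real.log_pos (by rw [lt_div_iff₀ hxpos]; linarith)
        have hLM : Real.log (2 * d / ‖x‖) ≤ M := by
          refine Real.log_le_log (by positivity) ?_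
          rw [div_le_div_iff₀ hxpos hnx0]
          nlinarith
        refine ENNReal.ofReal_le_ofReal ?_
        have hexp := exp_low_bound hr0 hzx
        calc c / ‖x - x₀‖ ^ 2
            = (Real.exp (-C₀) / ‖x - x₀‖ ^ 2) / M := by
              rw [hcdef]; ring
          _ ≤ Real.exp (z x) / M := by gcongr
          _ ≤ Real.exp (z x) / Real.log (2 * d / ‖x‖) := by
              gcongr
      calc (⊤ : ℝ≥0∞) = ∫⁻ x in ball x₀ ρ, f (‖x - x₀‖) := hradial.symm
        _ ≤ ∫⁻ x in ball x₀ ρ,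
            ENNReal.ofReal (Real.exp (z x) / Real.log (2 * d / ‖x‖)) :=
          lintegral_mono_ae hae
        _ ≤ ∫⁻ x in ball x₀ R,
            ENNReal.ofReal (Real.exp (z x) / Real.log (2 * d / ‖x‖)) :=
          lintegral_mono_set (ball_subset_ball hρR)
  refine ⟨key, fun C hC => ?_⟩
  have hnn : 0 ≤ᵐ[volume.restrict (ball x₀ R)]
      fun x : E2 => Real.exp (z x) / Real.log (2 * d / ‖x‖) :=
    (ae_restrict_iff' measurableSet_ball).2 (ae_of_all _ hφnonneg)
  exact (lintegral_ofReal_ne_top_iff_integrable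
    hC.2.aestronglyMeasurable hnn).2 hC.2 key
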